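/- In the LMG exchange step: let T be a spanning tree rooted at v0, v a vertex with current parent u' in T, and consider replacing edge (u', v) by edge (v0, v) (materializing v). Then the recreation cost of every descendant w of v in T (including v) decreases by exactly R_T(v) - Phi(v0, v), where R_T(v) is v's recreation cost in T, and the recreation cost of every non-descendant is unchanged; hence the total recreation cost decreases by k * (R_T(v) - Phi(v0,v)) where k is the number of vertices in the subtree rooted at v. -/

import Mathlib

/-- A spanning tree (arborescence) rooted at `v0`, given by a parent map. -/
structure ArbTree (V : Type) (v0 : V) where
  parent : V → V
  root_fix : parent v0 = v0
  reaches : ∀ v, ∃ n, parent^[n] v = v0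

/-- The number of tree edges on the path from `v` up to the root. -/
noncomputable def ArbTree.depth {V : Type} [DecidableEq V] {v0 : V}
    (T : ArbTree V v0) (v : V) : ℕ :=
  Nat.find (T.reaches v)

/-- The recreation cost of `v`: total weight of the tree path from `v0` to `v`. -/
noncomputable def recCost {V : Type} [DecidableEq V] {v0 : V}
    (T : ArbTree V v0) (w : V → V → ℝ) (v : V) : ℝ :=
  ∑ i ∈ Finset.range (T.depth v), w (T.parent^[i+1] v) (T.parent^[i] v)

/-- The storage cost of the tree: total weight of its edges. -/
noncomputable def treeCost {V : Type} [Fintype V] [DecidableEq V] {v0 : V}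
    (T : ArbTree V v0) (w : V → V → ℝ) : ℝ :=
  ∑ v ∈ Finset.univ.filter (· ≠ v0), w (T.parent v) v

/-- The tree is a spanning tree of the graph with adjacency `Adj`. -/
def IsSpanning {V : Type} {v0 : V} (Adj : V → V → Prop) (T : ArbTree V v0) : Prop :=
  ∀ v, v ≠ v0 → Adj (T.parent v) v

/-- `l` is a walk from `a` to `b` in the graph with adjacency `Adj`. -/
def IsWalk {V : Type} (Adj : V → V → Prop) (a b : V) (l : List V) : Prop :=
  l.Chain' Adj ∧ l.head? = some a ∧ l.getLast? = some b

/-- Total weight of a walk. -/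
def walkCost {V : Type} (w : V → V → ℝ) : List V → ℝ
  | [] => 0
  | [_] => 0
  | a :: b :: rest => w a b + walkCost w (b :: rest)

/-- Shortest-path distance from `a` to `b`. -/
noncomputable def graphDist {V : Type} (Adj : V → V → Prop) (w : V → V → ℝ)
    (a b : V) : ℝ :=
  sInf {c | ∃ l, IsWalk Adj a b l ∧ walkCost w l = c}

/-- LMG exchange step: replacing the parent edge of `v` by the direct
edge `(v0, v)` decreases the recreation cost of every descendant of `v` (including `v`)
by exactly `R_T(v) - Φ(v0,v)`, leaves all other recreation costs unchanged, and hence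
decreases the total recreation cost by `k * (R_T(v) - Φ(v0,v))` where `k` is the number
of vertices in the subtree rooted at `v`. -/
theorem stmt14 {V : Type} [Fintype V] [DecidableEq V] (v0 : V)
    (Φ : V → V → ℝ) (hΦ : ∀ a b, 0 ≤ Φ a b)
    (T : ArbTree V v0) (v : V) (hv : v ≠ v0)
    (hle : Φ v0 v ≤ recCost T Φ v)
    (T' : ArbTree V v0) (hT' : T'.parent = Function.update T.parent v v0) :
    (∀ x, (∃ n, T.parent^[n] x = v) →
      recCost T' Φ x = recCost T Φ x - (recCost T Φ v - Φ v0 v)) ∧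
    (∀ x, ¬ (∃ n, T.parent^[n] x = v) → recCost T' Φ x = recCost T Φ x) ∧
    (∑ x, recCost T' Φ x) = (∑ x, recCost T Φ x) -
      (Nat.card {x : V // ∃ n, T.parent^[n] x = v} : ℝ) *
        (recCost T Φ v - Φ v0 v) := by
  classical
  have hroot : ∀ k, T.parent^[k] v0 = v0 := fun k => Function.iterate_fixed T.root_fix k
  have hdspec : ∀ x, T.parent^[T.depth x] x = v0 := fun x => Nat.find_spec (T.reaches x)
  have hdmin : ∀ x, ∀ m, m < T.depth x → T.parent^[m] x ≠ v0 :=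
    fun x m hm => Nat.find_min (T.reaches x) hm
  have hdv : 1 ≤ T.depth v := by
    rcases Nat.eq_zero_or_pos (T.depth v) with h | h
    · exfalso; have := hdspec v; rw [h] at this; exact hv this
    · exact h
  have huniq : ∀ x n, T.parent^[n] x = v → n + T.depth v = T.depth x := by
    intro x n hn
    have h1 : T.parent^[n + T.depth v] x = v0 := by
      rw [add_comm, Function.iterate_add_apply, hn]; exact hdspec v
    have hle1 : T.depth x ≤ n + T.depth v := Nat.find_le h1
    have hn_le : n ≤ T.depth x := by
      by_contra h
      push_neg at h
      have h2 : T.parent^[n] x = v0 := by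
        have e : n = (n - T.depth x) + T.depth x := (Nat.sub_add_cancel h.le).symm
        rw [e, Function.iterate_add_apply, hdspec, hroot]
      exact hv (hn.symm.trans h2)
    have h2 : n + T.depth v ≤ T.depth x := by
      by_contra h
      push_neg at h
      have hlt : T.depth x - n < T.depth v := by omega
      have h3 : T.parent^[T.depth x - n] v = v0 := by
        rw [← hn, ← Function.iterate_add_apply]
        have e : T.depth x - n + n = T.depth x := by omega
        rw [e]; exact hdspec x
      exact hdmin v _ hlt h3
    omega
  have hupd : ∀ y, y ≠ v → T'.parent y = T.parent y := by
    intro y hy; rw [hT', Function.update_of_ne hy]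
  have hupv : T'.parent v = v0 := by rw [hT', Function.update_self]
  have hchain : ∀ x n, T.parent^[n] x = v → ∀ i, i ≤ n →
      T'.parent^[i] x = T.parent^[i] x := by
    intro x n hn i hi
    induction i with
    | zero => simp
    | succ i ih =>
      have hi' : i ≤ n := by omega
      rw [Function.iterate_succ_apply', Function.iterate_succ_apply', ih hi']
      apply hupd
      intro hiv
      have h1 := huniq x i hiv
      have h2 := huniq x n hn
      omega
  have hdesc : ∀ x, (∃ n, T.parent^[n] x = v) →
      recCost T' Φ x = recCost T Φ x - (recCost T Φ v - Φ v0 v) := by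
    rintro x ⟨n, hn⟩
    have hdx : T.depth x = n + T.depth v := (huniq x n hn).symm
    have hdx' : T'.depth x = n + 1 := by
      rw [ArbTree.depth, Nat.find_eq_iff]
      constructor
      · rw [Function.iterate_succ_apply', hchain x n hn n le_rfl, hn, hupv]
      · intro m hm h0
        have h1 : T.parent^[m] x = v0 := by
          rw [← hchain x n hn m (by omega)]; exact h0
        exact hdmin x m (by omega) h1
    have hsum' : recCost T' Φ x
        = (∑ i ∈ Finset.range n, Φ (T.parent^[i+1] x) (T.parent^[i] x)) + Φ v0 v := by
      rw [recCost, hdx', Finset.sum_range_succ]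
      congr 1
      · apply Finset.sum_congr rfl
        intro i hi
        simp only [Finset.mem_range] at hi
        rw [hchain x n hn (i+1) (by omega), hchain x n hn i (by omega)]
      · rw [Function.iterate_succ_apply', hchain x n hn n le_rfl, hn, hupv]
    have hsum : recCost T Φ x
        = (∑ i ∈ Finset.range n, Φ (T.parent^[i+1] x) (T.parent^[i] x)) + recCost T Φ v := by
      rw [recCost, hdx, Finset.sum_range_add]
      congr 1
      rw [recCost]
      apply Finset.sum_congr rfl
      intro j hj
      have e1 : T.parent^[n + (j+1)] x = T.parent^[j+1] v := by
        rw [add_comm, Function.iterate_add_apply, hn]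
      have e2 : T.parent^[n + j] x = T.parent^[j] v := by
        rw [add_comm, Function.iterate_add_apply, hn]
      rw [show n + j + 1 = n + (j+1) from by ring, e1, e2]
    rw [hsum', hsum]; ring
  have hnd : ∀ x, ¬ (∃ n, T.parent^[n] x = v) → recCost T' Φ x = recCost T Φ x := by
    intro x hx
    push_neg at hx
    have hch : ∀ i, T'.parent^[i] x = T.parent^[i] x := by
      intro i
      induction i with
      | zero => simp
      | succ i ih =>
        rw [Function.iterate_succ_apply', Function.iterate_succ_apply', ih, hupd _ (hx i)]
    have hd : T'.depth x = T.depth x := by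
      rw [ArbTree.depth, Nat.find_eq_iff]
      exact ⟨by rw [hch]; exact hdspec x,
        fun m hm h => hdmin x m hm (by rw [← hch]; exact h)⟩
    rw [recCost, recCost, hd]
    exact Finset.sum_congr rfl fun i _ => by rw [hch, hch]
  refine ⟨hdesc, hnd, ?_⟩
  set c := recCost T Φ v - Φ v0 v with hc
  have key : ∀ x : V, recCost T' Φ x
      = recCost T Φ x - (if (∃ n, T.parent^[n] x = v) then c else 0) := by
    intro x
    by_cases h : ∃ n, T.parent^[n] x = v
    · rw [if_pos h, hdesc x h]
    · rw [if_neg h, hnd x h]; ring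
  calc (∑ x, recCost T' Φ x)
      = ∑ x, (recCost T Φ x - (if (∃ n, T.parent^[n] x = v) then c else 0)) :=
        Finset.sum_congr rfl fun x _ => key x
    _ = (∑ x, recCost T Φ x) - ∑ x, (if (∃ n, T.parent^[n] x = v) then c else 0) :=
        Finset.sum_sub_distrib _ _
    _ = (∑ x, recCost T Φ x)
        - (Nat.card {x : V // ∃ n, T.parent^[n] x = v} : ℝ) * c := by
        congr 1
        rw [Finset.sum_ite, Finset.sum_const, Finset.sum_const_zero, add_zero,
          Nat.card_eq_fintype_card, Fintype.card_subtype, nsmul_eq_mul]
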